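/- Let f be a Rogers function and ζ ∈ ℂ with Re ζ > 0. Then the function g(ξ) = (ξ² / ((ξ − ζ)(ξ + conj(ζ)))) · ( f(ξ) − Re f(ζ) − ((iξ + Im ζ)/Re ζ)·Im f(ζ) ), defined for ξ in the right half-plane with ξ ≠ ζ and extended continuously (holomorphically) at ξ = ζ, is a Rogers function. -/

import Mathlib

open Complex Set Metric ComplexConjugate Filter Topology

/-- A Rogers function: holomorphic on the right half-plane `{Re ξ > 0}` with
`Re(f(ξ)/ξ) ≥ 0` there. -/
def IsRogers (f : ℂ → ℂ) : Prop :=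
  DifferentiableOn ℂ f {ξ : ℂ | 0 < ξ.re} ∧ ∀ ξ : ℂ, 0 < ξ.re → 0 ≤ (f ξ / ξ).re

section AuxLemmas


lemma normSq_eq_mul_self (z : ℂ) : normSq z = ‖z‖ * ‖z‖ := by
  rw [Complex.normSq_eq_norm_sq, sq]

lemma re_div_eq (z d : ℂ) : (z / d).re = (z * conj d).re / normSq d := by
  rcases eq_or_ne d 0 with h | h
  · simp [h]
  · have hn : normSq d ≠ 0 := (normSq_pos.mpr h).ne'
    rw [eq_div_iff hn, Complex.div_re, Complex.mul_re, conj_re, conj_im]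
    field_simp
    ring

lemma core_ineq (ξ ζ v w : ℂ) (p q : ℝ) (hξ : 0 < ξ.re) (hζ : 0 < ζ.re) (hw : 0 ≤ w.re)
    (hp : ζ.re * p = w.re * normSq ζ) (hq : ζ.re * q = (ζ * w).im)
    (hSP : ‖v - w‖ * ‖ξ + conj ζ‖ ≤ ‖ξ - ζ‖ * ‖v + conj w‖) :
    0 ≤ ((ξ^2 * v - (p:ℂ) * ξ - I * (q:ℂ) * ξ^2) / ((ξ - ζ) * (ξ + conj ζ))).re := by
  set N : ℂ := ξ^2 * v - (p:ℂ) * ξ - I * (q:ℂ) * ξ^2 with hN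
  set D : ℂ := (ξ - ζ) * (ξ + conj ζ) with hD
  set m1 : ℝ := normSq (ξ - ζ) with hm1
  set m2 : ℝ := normSq (ξ + conj ζ) with hm2
  set k : ℝ := 4*ξ.re*ζ.re with hk
  set W : ℂ := ((m1 : ℝ) : ℂ) * w + ((m2 : ℝ) : ℂ) * conj w with hW
  have hk0 : 0 < k := by rw [hk]; positivity
  -- E ≥ 0 from hSP
  have hE : m2 * normSq (v - w) ≤ m1 * normSq (v + conj w) := by
    have h1 := mul_le_mul hSP hSP (by positivity) (by positivity)
    rw [hm1, hm2, normSq_eq_mul_self, normSq_eq_mul_self, normSq_eq_mul_self,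
      normSq_eq_mul_self]
    nlinarith [h1]
  -- I2 identity
  have hI2 : normSq (((k : ℝ) : ℂ) * v - conj W)
      + k * (m1 * normSq (v + conj w) - m2 * normSq (v - w))
      = 4 * m1 * m2 * w.re^2 := by
    rw [hW, hk, hm1, hm2]
    simp only [normSq_apply, mul_re, mul_im, sub_re, sub_im, add_re, add_im, conj_re, conj_im,
      ofReal_re, ofReal_im]
    ring
  -- bound on |k v - conj W|
  have hm1m2 : (0:ℝ) ≤ m1 * m2 := mul_nonneg (normSq_nonneg _) (normSq_nonneg _)
  have hbd2 : normSq (((k : ℝ) : ℂ) * v - conj W) ≤ (2 * Real.sqrt (m1 * m2) * w.re)^2 := by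
    have : (2 * Real.sqrt (m1 * m2) * w.re)^2 = 4 * m1 * m2 * w.re^2 := by
      rw [mul_pow, mul_pow, Real.sq_sqrt hm1m2]; ring
    rw [this, ← hI2]
    nlinarith [mul_le_mul_of_nonneg_left hE hk0.le]
  have hbd : ‖((k : ℝ) : ℂ) * v - conj W‖ ≤ 2 * Real.sqrt (m1 * m2) * w.re := by
    have h0 : (0:ℝ) ≤ 2 * Real.sqrt (m1 * m2) * w.re :=
      mul_nonneg (by positivity) hw
    have h2 := Real.sqrt_le_sqrt hbd2
    rw [Real.sqrt_sq h0, ← Complex.norm_def] at h2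
    exact h2
  -- I1 identity
  have hI1 : k * (N * conj D).re
      = 2 * normSq ξ * m1 * m2 * w.re
        + (ξ^2 * conj D * (((k : ℝ) : ℂ) * v - conj W)).re := by
    have hα : ζ.re ≠ 0 := hζ.ne'
    simp only [mul_im, normSq_apply] at hp hq
    have hp' : p = (w.re * (ζ.re * ζ.re + ζ.im * ζ.im)) / ζ.re := by
      rw [eq_div_iff hα]; linarith
    have hq' : q = (ζ.re * w.im + ζ.im * w.re) / ζ.re := by
      rw [eq_div_iff hα]; linarith
    subst hp' hq'
    rw [hN, hD, hW, hm1, hm2, hk]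
    simp only [normSq_apply, mul_re, mul_im, sub_re, sub_im, add_re, add_im, conj_re, conj_im,
      ofReal_re, ofReal_im, I_re, I_im, pow_two]
    field_simp
    ring
  -- modulus of A
  have hA : ‖ξ^2 * conj D‖ = normSq ξ * Real.sqrt (m1 * m2) := by
    rw [norm_mul, norm_pow, Complex.norm_conj, hD, norm_mul,
      Complex.sq_norm, Complex.norm_def, Complex.norm_def,
      ← Real.sqrt_mul (normSq_nonneg _), ← hm1, ← hm2]
  -- lower bound for the re term
  have hre : -(2 * normSq ξ * m1 * m2 * w.re)
      ≤ (ξ^2 * conj D * (((k : ℝ) : ℂ) * v - conj W)).re := by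
    have h1 : |(ξ^2 * conj D * (((k : ℝ) : ℂ) * v - conj W)).re|
        ≤ ‖ξ^2 * conj D * (((k : ℝ) : ℂ) * v - conj W)‖ := Complex.abs_re_le_norm _
    have h2 : ‖ξ^2 * conj D * (((k : ℝ) : ℂ) * v - conj W)‖
        ≤ (normSq ξ * Real.sqrt (m1 * m2)) * (2 * Real.sqrt (m1 * m2) * w.re) := by
      rw [norm_mul, hA]
      exact mul_le_mul_of_nonneg_left hbd (mul_nonneg (normSq_nonneg _) (Real.sqrt_nonneg _))
    have h3 : (normSq ξ * Real.sqrt (m1 * m2)) * (2 * Real.sqrt (m1 * m2) * w.re)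
        = 2 * normSq ξ * m1 * m2 * w.re := by
      have : Real.sqrt (m1 * m2) * Real.sqrt (m1 * m2) = m1 * m2 :=
        Real.mul_self_sqrt hm1m2
      linear_combination (2 * normSq ξ * w.re) * this
    have h4 := (abs_le.mp (h1.trans (h2.trans_eq h3))).1
    linarith
  have hpos : 0 ≤ (N * conj D).re := by nlinarith [hI1, hre, hk0]
  rw [re_div_eq]
  exact div_nonneg hpos (normSq_nonneg _)



lemma normSq_eq_mul_self' (z : ℂ) : normSq z = ‖z‖ * ‖z‖ := by
  rw [Complex.normSq_eq_norm_sq, sq]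

lemma norm_lt_of_normSq_lt {a b : ℂ} (h : normSq a < normSq b) : ‖a‖ < ‖b‖ := by
  rw [normSq_eq_mul_self', normSq_eq_mul_self'] at h
  nlinarith [norm_nonneg a, norm_nonneg b]

lemma one_add_ne_zero {a : ℂ} (h : ‖a‖ < 1) : 1 + a ≠ 0 := by
  intro he
  have : a = -1 := by linear_combination he
  rw [this] at h
  simp at h

lemma one_sub_ne_zero {a : ℂ} (h : ‖a‖ < 1) : 1 - a ≠ 0 := by
  intro he
  have : a = 1 := by linear_combination -he
  rw [this] at h
  simp at h

lemma normSq_lt_one_of_norm_lt {a : ℂ} (h : ‖a‖ < 1) : normSq a < 1 := by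
  rw [normSq_eq_mul_self']
  nlinarith [norm_nonneg a]

-- Cayley: maps disk to right half-plane
lemma cay_re_pos {z : ℂ} (h : ‖z‖ < 1) : 0 < ((1 + z) / (1 - z)).re := by
  have h1 : ((1 + z) * conj (1 - z)).re = 1 - normSq z := by
    simp [Complex.mul_re, normSq_apply]
    ring
  have : ((1 + z) / (1 - z)).re = (1 - normSq z) / normSq (1 - z) := by
    rw [← h1]
    rcases eq_or_ne (1 - z) 0 with h0 | h0
    · exact absurd h0 (one_sub_ne_zero h)
    · have hn : normSq (1 - z) ≠ 0 := (normSq_pos.mpr h0).ne'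
      rw [eq_div_iff hn, Complex.div_re, Complex.mul_re, conj_re, conj_im]
      field_simp
      ring
  rw [this]
  exact div_pos (by linarith [normSq_lt_one_of_norm_lt h])
    (normSq_pos.mpr (one_sub_ne_zero h))

-- half-plane to disk
lemma T_norm_lt {w w₀ : ℂ} (hw : 0 < w.re) (hw₀ : 0 < w₀.re) :
    ‖(w - w₀) / (w + conj w₀)‖ < 1 := by
  have hne : w + conj w₀ ≠ 0 := by
    intro he
    have : (w + conj w₀).re = 0 := by rw [he]; simp
    simp only [add_re, conj_re] at this
    linarith
  rw [norm_div, div_lt_one (norm_pos_iff.mpr hne)]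
  apply norm_lt_of_normSq_lt
  simp only [normSq_apply, sub_re, sub_im, add_re, add_im, conj_re, conj_im]
  nlinarith [hw, hw₀]

-- membership of cayley inverse
lemma cayinv_mem {ξ : ℂ} (hξ : 0 < ξ.re) : ‖(ξ - 1) / (ξ + 1)‖ < 1 := by
  have hne : ξ + 1 ≠ 0 := by
    intro he
    have : (ξ + 1).re = 0 := by rw [he]; simp
    simp only [add_re, one_re] at this
    linarith
  rw [norm_div, div_lt_one (norm_pos_iff.mpr hne)]
  apply norm_lt_of_normSq_lt
  simp only [normSq_apply, sub_re, sub_im, add_re, add_im, one_re, one_im]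
  nlinarith [hξ]

-- mobius maps disk to disk
lemma mobius_mem {z₀ z : ℂ} (h₀ : ‖z₀‖ < 1) (h : ‖z‖ < 1) :
    ‖(z + z₀) / (1 + conj z₀ * z)‖ < 1 := by
  have hne : 1 + conj z₀ * z ≠ 0 := by
    apply one_add_ne_zero
    rw [norm_mul, RCLike.norm_conj]
    nlinarith [norm_nonneg z₀, norm_nonneg z]
  rw [norm_div, div_lt_one (norm_pos_iff.mpr hne)]
  apply norm_lt_of_normSq_lt
  have key : normSq (1 + conj z₀ * z) - normSq (z + z₀)
      = (1 - normSq z₀) * (1 - normSq z) := by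
    simp only [normSq_apply, add_re, add_im, mul_re, mul_im, one_re, one_im, conj_re, conj_im]
    ring
  nlinarith [normSq_lt_one_of_norm_lt h₀, normSq_lt_one_of_norm_lt h, key]

lemma isOpen_halfplane : IsOpen {ξ : ℂ | 0 < ξ.re} := isOpen_lt continuous_const Complex.continuous_re

lemma schwarz_pick (F : ℂ → ℂ) (hF : DifferentiableOn ℂ F {ξ : ℂ | 0 < ξ.re})
    (hRe : ∀ ξ : ℂ, 0 < ξ.re → 0 < (F ξ).re) (ξ ζ : ℂ) (hξ : 0 < ξ.re) (hζ : 0 < ζ.re) :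
    ‖F ξ - F ζ‖ * ‖ξ + conj ζ‖ ≤ ‖ξ - ζ‖ * ‖F ξ + conj (F ζ)‖ := by
  set w₀ : ℂ := F ζ with hw₀
  set z₀ : ℂ := (ζ - 1) / (ζ + 1) with hz₀def
  have hz₀ : ‖z₀‖ < 1 := cayinv_mem hζ
  have hζ1 : ζ + 1 ≠ 0 := by
    intro he
    have : (ζ + 1).re = 0 := by rw [he]; simp
    simp only [add_re, one_re] at this; linarith
  have hξ1 : ξ + 1 ≠ 0 := by
    intro he
    have : (ξ + 1).re = 0 := by rw [he]; simp
    simp only [add_re, one_re] at this; linarith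
  -- the composed self-map of the disk
  set m : ℂ → ℂ := fun z => (z + z₀) / (1 + conj z₀ * z) with hm
  set Cay : ℂ → ℂ := fun z => (1 + z) / (1 - z) with hCay
  set Φ : ℂ → ℂ := fun z => (F (Cay (m z)) - w₀) / (F (Cay (m z)) + conj w₀) with hΦ
  have hmmem : ∀ z ∈ ball (0:ℂ) 1, ‖m z‖ < 1 := by
    intro z hz
    simp only [mem_ball, dist_zero_right] at hz
    exact mobius_mem hz₀ hz
  have hCaymem : ∀ z : ℂ, ‖z‖ < 1 → 0 < (Cay z).re := fun z hz => cay_re_pos hz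
  have hΦmem : ∀ z ∈ ball (0:ℂ) 1, ‖Φ z‖ < 1 := by
    intro z hz
    exact T_norm_lt (hRe _ (hCaymem _ (hmmem z hz))) (hRe ζ hζ)
  -- m 0 = z₀, Cay z₀ = ζ
  have hm0 : m 0 = z₀ := by simp [hm]
  have hCayz₀ : Cay z₀ = ζ := by
    rw [hCay, hz₀def]
    field_simp
    ring
  have hΦ0 : Φ 0 = 0 := by
    rw [hΦ]
    simp only [hm0, hCayz₀, ← hw₀, sub_self, zero_div]
  -- differentiability
  have hdiff : DifferentiableOn ℂ Φ (ball (0:ℂ) 1) := by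
    intro z hz
    apply DifferentiableAt.differentiableWithinAt
    simp only [mem_ball, dist_zero_right] at hz
    have hden1 : 1 + conj z₀ * z ≠ 0 := by
      apply one_add_ne_zero
      rw [norm_mul, RCLike.norm_conj]
      nlinarith [norm_nonneg z₀, norm_nonneg z]
    have hdm : DifferentiableAt ℂ m z := by
      apply DifferentiableAt.div
      · exact (differentiableAt_id.add_const _)
      · exact (differentiableAt_const _).add ((differentiableAt_const _).mul differentiableAt_id)
      · exact hden1
    have hmz : ‖m z‖ < 1 := mobius_mem hz₀ hz
    have hdCay : DifferentiableAt ℂ Cay (m z) := by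
      apply DifferentiableAt.div
      · exact (differentiableAt_const _).add differentiableAt_id
      · exact (differentiableAt_const _).sub differentiableAt_id
      · exact one_sub_ne_zero hmz
    have hdF : DifferentiableAt ℂ F (Cay (m z)) :=
      hF.differentiableAt (isOpen_halfplane.mem_nhds (hCaymem _ hmz))
    have hinner : DifferentiableAt ℂ (fun z => F (Cay (m z))) z :=
      (hdF.comp z (hdCay.comp z hdm) : DifferentiableAt ℂ (F ∘ (Cay ∘ m)) z)
    apply DifferentiableAt.div
    · exact hinner.sub_const _
    · exact hinner.add_const _
    · intro he
      have : (F (Cay (m z)) + conj w₀).re = 0 := by rw [he]; simp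
      simp only [add_re, conj_re] at this
      have h1 := hRe _ (hCaymem _ hmz)
      have h2 : 0 < w₀.re := hRe ζ hζ
      linarith
  -- Schwarz
  have hmaps : MapsTo Φ (ball (0:ℂ) 1) (ball (Φ 0) 1) := by
    intro z hz
    rw [hΦ0]
    simpa only [mem_ball, dist_zero_right] using hΦmem z hz
  -- the point to evaluate at
  set zx : ℂ := (ξ - 1) / (ξ + 1) with hzx
  have hzxmem : ‖zx‖ < 1 := cayinv_mem hξ
  have hden2 : 1 - conj z₀ * zx ≠ 0 := by
    apply one_sub_ne_zero
    rw [norm_mul, RCLike.norm_conj]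
    nlinarith [norm_nonneg z₀, norm_nonneg zx]
  set zξ : ℂ := (zx - z₀) / (1 - conj z₀ * zx) with hzξ
  have hnz₀ : (1:ℂ) - conj z₀ * z₀ ≠ 0 := by
    apply one_sub_ne_zero
    rw [norm_mul, RCLike.norm_conj]
    nlinarith [norm_nonneg z₀]
  -- zξ in unit ball
  have hzξmem : ‖zξ‖ < 1 := by
    rw [hzξ, norm_div, div_lt_one (norm_pos_iff.mpr hden2)]
    apply norm_lt_of_normSq_lt
    have key : normSq (1 - conj z₀ * zx) - normSq (zx - z₀)
        = (1 - normSq z₀) * (1 - normSq zx) := by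
      simp only [normSq_apply, sub_re, sub_im, mul_re, mul_im, one_re, one_im, conj_re, conj_im]
      ring
    nlinarith [normSq_lt_one_of_norm_lt hz₀, normSq_lt_one_of_norm_lt hzxmem, key]
  -- m zξ = zx
  have hden3 : 1 + conj z₀ * zξ ≠ 0 := by
    apply one_add_ne_zero
    rw [norm_mul, RCLike.norm_conj]
    nlinarith [norm_nonneg z₀, norm_nonneg zξ, hzξmem, hz₀]
  have hmzξ : m zξ = zx := by
    show (zξ + z₀) / (1 + conj z₀ * zξ) = zx
    rw [div_eq_iff hden3, hzξ]
    have hden2' : 1 - zx * conj z₀ ≠ 0 := by rwa [mul_comm]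
    field_simp
    ring
  -- Cay zx = ξ
  have hCayzx : Cay zx = ξ := by
    rw [hCay, hzx]
    field_simp
    ring
  -- apply Schwarz lemma
  have hzξball : zξ ∈ ball (0:ℂ) 1 := by
    simpa only [mem_ball, dist_zero_right] using hzξmem
  have hS := dist_le_div_mul_dist_of_mapsTo_ball hdiff (hmaps.mono_right ball_subset_closedBall) hzξball
  rw [hΦ0, dist_zero_right, dist_zero_right, div_self (one_ne_zero), one_mul] at hS
  -- evaluate Φ zξ
  have hΦzξ : Φ zξ = (F ξ - w₀) / (F ξ + conj w₀) := by
    rw [hΦ]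
    simp only [hmzξ, hCayzx]
  rw [hΦzξ] at hS
  -- compute ‖zξ‖
  have hξζ : ξ + conj ζ ≠ 0 := by
    intro he
    have : (ξ + conj ζ).re = 0 := by rw [he]; simp
    simp only [add_re, conj_re] at this
    linarith
  have hcζ1 : conj ζ + 1 ≠ 0 := by
    intro he
    have : (conj ζ + 1).re = 0 := by rw [he]; simp
    simp only [add_re, conj_re, one_re] at this
    linarith
  have hzξval : zξ = (ξ - ζ) * (conj ζ + 1) / ((ξ + conj ζ) * (ζ + 1)) := by
    rw [hzξ, hzx, hz₀def]
    have hconj : conj ((ζ - 1) / (ζ + 1)) = (conj ζ - 1) / (conj ζ + 1) := by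
      rw [map_div₀, map_sub, map_add, map_one]
    rw [hconj]
    rw [div_eq_div_iff]
    · field_simp
      ring
    · rw [hconj] at hden2
      exact hden2
    · exact mul_ne_zero hξζ hζ1
  have hnorm_zξ : ‖zξ‖ * ‖ξ + conj ζ‖ = ‖ξ - ζ‖ := by
    rw [hzξval, norm_div, norm_mul, norm_mul]
    have h1 : ‖conj ζ + 1‖ = ‖ζ + 1‖ := by
      rw [show conj ζ + 1 = conj (ζ + 1) by rw [map_add, map_one], RCLike.norm_conj]
    rw [h1]
    have hzn : ‖ξ + conj ζ‖ ≠ 0 := norm_ne_zero_iff.mpr hξζ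
    have hzn2 : ‖ζ + 1‖ ≠ 0 := norm_ne_zero_iff.mpr hζ1
    rw [div_mul_eq_mul_div, div_eq_iff (mul_ne_zero hzn hzn2)]
    ring
  -- conclude
  have hFden : F ξ + conj w₀ ≠ 0 := by
    intro he
    have : (F ξ + conj w₀).re = 0 := by rw [he]; simp
    simp only [add_re, conj_re] at this
    have h1 := hRe ξ hξ
    have h2 : 0 < w₀.re := hRe ζ hζ
    linarith
  rw [norm_div] at hS
  rw [div_le_iff₀ (norm_pos_iff.mpr hFden)] at hS
  calc ‖F ξ - F ζ‖ * ‖ξ + conj ζ‖ = ‖F ξ - w₀‖ * ‖ξ + conj ζ‖ := rfl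
    _ ≤ (‖zξ‖ * ‖F ξ + conj w₀‖) * ‖ξ + conj ζ‖ := by
        apply mul_le_mul_of_nonneg_right hS (norm_nonneg _)
    _ = (‖zξ‖ * ‖ξ + conj ζ‖) * ‖F ξ + conj w₀‖ := by ring
    _ = ‖ξ - ζ‖ * ‖F ξ + conj (F ζ)‖ := by rw [hnorm_zξ, hw₀]

end AuxLemmas

set_option maxHeartbeats 1000000 in
/-- For a Rogers function `f` and `Re ζ > 0`, the function
`g(ξ) = (ξ²/((ξ−ζ)(ξ+conj ζ)))·(f(ξ) − Re f(ζ) − ((iξ + Im ζ)/Re ζ)·Im f(ζ))`,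
extended holomorphically at `ξ = ζ`, is a Rogers function. -/
theorem stmt_10 (f : ℂ → ℂ) (hf : IsRogers f) (ζ : ℂ) (hζ : 0 < ζ.re) :
    ∃ g : ℂ → ℂ, IsRogers g ∧
      ∀ ξ : ℂ, 0 < ξ.re → ξ ≠ ζ →
        g ξ = ξ ^ 2 / ((ξ - ζ) * (ξ + (starRingEnd ℂ) ζ)) *
          (f ξ - ((f ζ).re : ℂ) -
            ((Complex.I * ξ + (ζ.im : ℂ)) / (ζ.re : ℂ)) * ((f ζ).im : ℂ)) := by
  obtain ⟨hfd, hfre⟩ := hf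
  have hζ0 : ζ ≠ 0 := fun he => by simp [he] at hζ
  have hα : (ζ.re : ℂ) ≠ 0 := by
    simpa using ofReal_ne_zero.mpr hζ.ne'
  -- the numerator function
  set h : ℂ → ℂ := fun ξ => f ξ - ((f ζ).re : ℂ) -
      ((Complex.I * ξ + (ζ.im : ℂ)) / (ζ.re : ℂ)) * ((f ζ).im : ℂ) with hh
  have hhζ : h ζ = 0 := by
    rw [hh]
    simp only
    rw [div_mul_eq_mul_div, sub_eq_zero, eq_div_iff hα]
    rw [sub_mul]
    apply Complex.ext <;> simp [Complex.ext_iff, mul_re, mul_im, add_re, add_im] <;> ring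
  have hhd : DifferentiableOn ℂ h {ξ : ℂ | 0 < ξ.re} := by
    apply DifferentiableOn.sub
    apply DifferentiableOn.sub hfd (differentiableOn_const _)
    apply DifferentiableOn.mul _ (differentiableOn_const _)
    apply DifferentiableOn.div_const
    exact ((differentiable_const I).mul differentiable_id).add_const _ |>.differentiableOn
  -- dslope
  have hζH : ζ ∈ {ξ : ℂ | 0 < ξ.re} := hζ
  have hds : DifferentiableOn ℂ (dslope h ζ) {ξ : ℂ | 0 < ξ.re} :=
    (differentiableOn_dslope (isOpen_halfplane.mem_nhds hζH)).mpr hhd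
  have hne2 : ∀ ξ : ℂ, 0 < ξ.re → ξ + conj ζ ≠ 0 := by
    intro ξ hξ he
    have : (ξ + conj ζ).re = 0 := by rw [he]; simp
    simp only [add_re, conj_re] at this
    linarith
  set g : ℂ → ℂ := fun ξ => ξ^2 * dslope h ζ ξ / (ξ + conj ζ) with hg
  have hgd : DifferentiableOn ℂ g {ξ : ℂ | 0 < ξ.re} := by
    apply DifferentiableOn.div
    · exact (differentiable_pow 2).differentiableOn.mul hds
    · exact (differentiable_id.add_const _).differentiableOn
    · exact fun ξ hξ => hne2 ξ hξ
  -- the formula for ξ ≠ ζ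
  have hgval : ∀ ξ : ℂ, 0 < ξ.re → ξ ≠ ζ →
      g ξ = ξ ^ 2 / ((ξ - ζ) * (ξ + conj ζ)) * h ξ := by
    intro ξ hξ hneζ
    rw [hg]
    simp only
    rw [dslope_of_ne h hneζ, slope_def_field, hhζ, sub_zero]
    have hsub : ξ - ζ ≠ 0 := sub_ne_zero.mpr hneζ
    field_simp
  refine ⟨g, ⟨hgd, ?_⟩, fun ξ hξ hneζ => hgval ξ hξ hneζ⟩
  -- positivity
  have hnsζ : normSq ζ ≠ 0 := normSq_pos.mpr hζ0 |>.ne'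
  have key : ∀ ξ : ℂ, 0 < ξ.re → ξ ≠ ζ → 0 ≤ (g ξ / ξ).re := by
    intro ξ hξ hneζ
    have hξ0 : ξ ≠ 0 := fun he => by simp [he] at hξ
    set v : ℂ := f ξ / ξ with hv
    set w : ℂ := f ζ / ζ with hw
    have hwre : 0 ≤ w.re := hfre ζ hζ
    set D : ℂ := (ξ - ζ) * (ξ + conj ζ) with hD
    have hD0 : D ≠ 0 := mul_ne_zero (sub_ne_zero.mpr hneζ) (hne2 ξ hξ)
    set Ψ : ℝ → ℝ := fun δ =>
      ((ξ^2 * (v + (δ:ℂ)) - ((((w.re + δ) * normSq ζ) / ζ.re : ℝ):ℂ) * ξ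
         - I * ((((ζ * (w + (δ:ℂ))).im) / ζ.re : ℝ):ℂ) * ξ^2) / D).re with hΨ
    have hpos : ∀ δ : ℝ, 0 < δ → 0 ≤ Ψ δ := by
      intro δ hδ
      have hSP := schwarz_pick (fun z => f z / z + (δ:ℂ))
        (by
          apply DifferentiableOn.add_const
          apply hfd.div differentiable_id.differentiableOn
          exact fun z hz he => by rw [show z = 0 from he] at hz; simp at hz)
        (by
          intro z hz
          have := hfre z hz
          simp only [add_re, ofReal_re]
          linarith)
        ξ ζ hξ hζ
      have e1 : f ξ / ξ + (δ:ℂ) - (f ζ / ζ + (δ:ℂ)) = (v + δ) - (w + δ) := by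
        rw [hv, hw]
      have e2 : f ξ / ξ + (δ:ℂ) + conj (f ζ / ζ + (δ:ℂ)) = (v + δ) + conj (w + δ) := by
        rw [hv, hw]
      rw [e1, e2] at hSP
      exact core_ineq ξ ζ (v + δ) (w + δ) _ _ hξ hζ
        (by simp only [add_re, ofReal_re]; linarith)
        (by field_simp [add_re, ofReal_re]; simp)
        (by field_simp)
        hSP
    have hcont : Continuous Ψ := by
      rw [hΨ]
      fun_prop
    have hlim : Filter.Tendsto Ψ (nhdsWithin 0 (Set.Ioi 0)) (nhds (Ψ 0)) :=
      (hcont.tendsto 0).mono_left nhdsWithin_le_nhds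
    have h0 : 0 ≤ Ψ 0 :=
      ge_of_tendsto hlim (eventually_nhdsWithin_of_forall (fun δ hδ => hpos δ hδ))
    -- identify Ψ 0 with (g ξ / ξ).re
    have hre : w.re * normSq ζ = (f ζ).re * ζ.re + (f ζ).im * ζ.im := by
      rw [hw, Complex.div_re]
      field_simp
    have him : (ζ * w).im = (f ζ).im := by
      rw [hw, mul_div_cancel₀ _ hζ0]
    have hval : g ξ / ξ = (ξ^2 * v - (((w.re * normSq ζ) / ζ.re : ℝ):ℂ) * ξ
        - I * ((((ζ * w).im) / ζ.re : ℝ):ℂ) * ξ^2) / D := by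
      have hs : ξ - ζ ≠ 0 := sub_ne_zero.mpr hneζ
      have ha : ξ + conj ζ ≠ 0 := hne2 ξ hξ
      rw [hgval ξ hξ hneζ, hre, him, hh, hv, hD]
      simp only
      push_cast
      field_simp
      ring
    have hΨ0 : Ψ 0 = (g ξ / ξ).re := by
      rw [hΨ, hval]
      simp only [ofReal_zero, add_zero]
    rw [← hΨ0]
    exact h0
  intro ξ hξ
  rcases eq_or_ne ξ ζ with rfl | hneζ
  · -- continuity at ζ
    have hcg : ContinuousAt (fun z => (g z / z).re) ξ := by
      have h1 : ContinuousAt g ξ :=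
        (hgd.continuousOn.continuousAt (isOpen_halfplane.mem_nhds hξ))
      have hξ0 : ξ ≠ 0 := fun he => by simp [he] at hξ
      exact (Complex.continuous_re.continuousAt.comp
        (h1.div continuousAt_id hξ0))
    have hev : ∀ᶠ z in nhdsWithin ξ {ξ}ᶜ, 0 ≤ (g z / z).re := by
      have hH : {z : ℂ | 0 < z.re} ∈ nhds ξ := isOpen_halfplane.mem_nhds hξ
      filter_upwards [eventually_nhdsWithin_of_eventually_nhds
        (eventually_of_mem hH (fun z hz => hz)), self_mem_nhdsWithin] with z hz1 hz2
      exact key z hz1 hz2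
    exact ge_of_tendsto (hcg.tendsto.mono_left nhdsWithin_le_nhds) hev
  · exact key ξ hξ hneζ
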